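/- Derivative of the mass flux along the 3-Lax curve at the base pressure: let γ > 1 and let (ρ_R, q_R, E_R) be a gas state with ρ_R > 0, velocity u_R = q_R/ρ_R, pressure p_R = (γ−1)(E_R − q_R²/(2ρ_R)) > 0 and sound speed c_R = √(γp_R/ρ_R). With ψ and φ the Lax-curve parametrisation functions based at (ρ_R, p_R), the mass-flux function Q(σ) := φ(σ)·(u_R + ψ(σ)) has derivative Q′(p_R) = (u_R + c_R)/c_R² at σ = p_R. -/

import Mathlib

/-- The velocity function `ψ` of the Lax-curve parametrisation. -/
noncomputable def laxPsi (γ ρ p : ℝ) (σ : ℝ) : ℝ :=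
  if σ ≤ p then
    (2 * Real.sqrt (γ * p / ρ) / (γ - 1)) * ((σ / p) ^ ((γ - 1) / (2 * γ)) - 1)
  else
    (σ - p) * Real.sqrt ((1 - (γ - 1) / (γ + 1)) / (ρ * (σ + ((γ - 1) / (γ + 1)) * p)))

/-- The density function `φ` of the Lax-curve parametrisation. -/
noncomputable def laxPhi (γ ρ p : ℝ) (σ : ℝ) : ℝ :=
  if σ ≤ p then
    ρ * (σ / p) ^ (1 / γ)
  else
    ρ * (σ + ((γ - 1) / (γ + 1)) * p) / (((γ - 1) / (γ + 1)) * σ + p)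

/-- Smooth extension of the rarefaction (σ ≤ p) branch of the mass flux. -/
noncomputable def laxBranch1 (γ ρ p u : ℝ) (σ : ℝ) : ℝ :=
  ρ * (σ / p) ^ (1 / γ) *
    (u + (2 * Real.sqrt (γ * p / ρ) / (γ - 1)) * ((σ / p) ^ ((γ - 1) / (2 * γ)) - 1))

/-- Smooth extension of the shock (σ > p) branch of the mass flux. -/
noncomputable def laxBranch2 (γ ρ p u : ℝ) (σ : ℝ) : ℝ :=
  ρ * (σ + ((γ - 1) / (γ + 1)) * p) / (((γ - 1) / (γ + 1)) * σ + p) *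
    (u + (σ - p) * Real.sqrt ((1 - (γ - 1) / (γ + 1)) / (ρ * (σ + ((γ - 1) / (γ + 1)) * p))))

lemma laxBranch1_deriv (γ ρ p u : ℝ) (hγ : 1 < γ) (hρ : 0 < ρ) (hp : 0 < p) :
    HasDerivAt (laxBranch1 γ ρ p u)
      ((u + Real.sqrt (γ * p / ρ)) * ρ / (γ * p)) p := by
  set c := Real.sqrt (γ * p / ρ) with hc
  have hγ0 : (0:ℝ) < γ := by linarith
  have hc0 : 0 ≤ c := Real.sqrt_nonneg _
  have hc2 : c ^ 2 = γ * p / ρ := Real.sq_sqrt (by positivity)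
  have hq : HasDerivAt (fun σ : ℝ => σ / p) (1 / p) p := (hasDerivAt_id p).div_const p
  have hqp : p / p = 1 := div_self hp.ne'
  have hr : ∀ e : ℝ, HasDerivAt (fun σ : ℝ => (σ / p) ^ e) (e / p) p := by
    intro e
    have h := hq.rpow_const (p := e) (Or.inl (by rw [hqp]; norm_num))
    rw [hqp, Real.one_rpow] at h
    convert h using 1; ring
  have h1 : HasDerivAt (fun σ : ℝ => ρ * (σ / p) ^ (1 / γ)) (ρ * ((1 / γ) / p)) p :=
    (hr (1 / γ)).const_mul ρ
  have h2 : HasDerivAt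
      (fun σ : ℝ => u + (2 * c / (γ - 1)) * ((σ / p) ^ ((γ - 1) / (2 * γ)) - 1))
      ((2 * c / (γ - 1)) * (((γ - 1) / (2 * γ)) / p)) p :=
    ((((hr ((γ - 1) / (2 * γ))).sub_const 1).const_mul (2 * c / (γ - 1))).const_add u)
  have h := h1.mul h2
  simp only [hqp, Real.one_rpow, sub_self, mul_zero, add_zero] at h
  refine h.congr_deriv ?_
  have hγ1 : γ - 1 ≠ 0 := by linarith
  field_simp

lemma laxBranch2_deriv (γ ρ p u : ℝ) (hγ : 1 < γ) (hρ : 0 < ρ) (hp : 0 < p) :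
    HasDerivAt (laxBranch2 γ ρ p u)
      ((u + Real.sqrt (γ * p / ρ)) * ρ / (γ * p)) p := by
  set c := Real.sqrt (γ * p / ρ) with hc
  set m : ℝ := (γ - 1) / (γ + 1) with hm
  have hγ0 : (0:ℝ) < γ := by linarith
  have hγ1 : (0:ℝ) < γ + 1 := by linarith
  have hm0 : 0 < m := by rw [hm]; exact div_pos (by linarith) hγ1
  have hm1 : m < 1 := by rw [hm, div_lt_one hγ1]; linarith
  have hmγ : γ * (1 - m) = 1 + m := by
    rw [hm]; field_simp; ring
  have hden : m * p + p ≠ 0 := (add_pos (mul_pos hm0 hp) hp).ne'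
  have hfp : ρ * (p + m * p) ≠ 0 := (mul_pos hρ (add_pos hp (mul_pos hm0 hp))).ne'
  have hnum : HasDerivAt (fun σ : ℝ => ρ * (σ + m * p)) (ρ * 1) p :=
    ((hasDerivAt_id p).add_const (m * p)).const_mul ρ
  have hdenf : HasDerivAt (fun σ : ℝ => m * σ + p) (m * 1) p :=
    ((hasDerivAt_id p).const_mul m).add_const p
  have hφ := hnum.div hdenf hden
  have hi : HasDerivAt (fun σ : ℝ => (1 - m) / (ρ * (σ + m * p)))
      ((0 * (ρ * (p + m * p)) - (1 - m) * (ρ * 1)) / (ρ * (p + m * p)) ^ 2) p :=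
    (hasDerivAt_const p (1 - m)).div hnum hfp
  have hipos : 0 < (1 - m) / (ρ * (p + m * p)) :=
    div_pos (by linarith) (mul_pos hρ (add_pos hp (mul_pos hm0 hp)))
  have hsq := hi.sqrt hipos.ne'
  have hψ : HasDerivAt
      (fun σ : ℝ => (σ - p) * Real.sqrt ((1 - m) / (ρ * (σ + m * p))))
      (1 * Real.sqrt ((1 - m) / (ρ * (p + m * p))) +
        (p - p) * (((0 * (ρ * (p + m * p)) - (1 - m) * (ρ * 1)) / (ρ * (p + m * p)) ^ 2) /
          (2 * Real.sqrt ((1 - m) / (ρ * (p + m * p)))))) p :=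
    ((hasDerivAt_id p).sub_const p).mul hsq
  have h := hφ.mul (hψ.const_add u)
  have hc0 : 0 ≤ c := Real.sqrt_nonneg _
  have hc2 : c ^ 2 = γ * p / ρ := Real.sq_sqrt (by positivity)
  have hsval : Real.sqrt ((1 - m) / (ρ * (p + m * p))) = c / (γ * p) := by
    have hA : 0 < ρ * (p + m * p) :=
      mul_pos hρ (add_pos hp (mul_pos hm0 hp))
    have hkey : (1 - m) / (ρ * (p + m * p)) = (c / (γ * p)) ^ 2 := by
      rw [div_pow, hc2, div_eq_div_iff hA.ne' (by positivity : ((γ:ℝ) * p) ^ 2 ≠ 0)]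
      have : γ * p / ρ * (ρ * (p + m * p)) = γ * p * (p + m * p) := by
        field_simp
      rw [this]
      have h2 : (1 + m) * p = m * p + p := by ring
      nlinarith [hmγ, sq_nonneg p, hp, hγ0]
    rw [hkey, Real.sqrt_sq (div_nonneg hc0 (by positivity))]
  rw [hsval] at h
  simp only [one_mul, mul_one, sub_self, zero_mul, mul_zero, add_zero, zero_sub, zero_div, Pi.div_apply] at h
  have e1 : ρ * (p + m * p) / (m * p + p) = ρ := by
    rw [show p + m * p = m * p + p from by ring, mul_div_assoc, div_self hden, mul_one]
  have e2 : (ρ * (m * p + p) - ρ * (p + m * p) * m) / (m * p + p) ^ 2 = ρ / (γ * p) := by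
    rw [div_eq_div_iff (pow_ne_zero 2 hden) (by positivity : (γ:ℝ) * p ≠ 0)]
    linear_combination (ρ * p * (m * p + p)) * hmγ
  rw [e1, e2] at h
  refine h.congr_deriv ?_
  ring


/-- Derivative of the mass flux `Q(σ) = φ(σ)·(u_R + ψ(σ))` along the 3-Lax curve at the
base pressure: `Q′(p_R) = (u_R + c_R)/c_R² = λ₃/c_R²`. -/
theorem lax3_massFlux_deriv_at_base
    (γ : ℝ) (hγ : 1 < γ)
    (ρR qR ER uR pR cR : ℝ) (hρ : 0 < ρR)
    (huR : uR = qR / ρR)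
    (hpR : pR = (γ - 1) * (ER - qR ^ 2 / (2 * ρR))) (hp : 0 < pR)
    (hcR : cR = Real.sqrt (γ * pR / ρR)) :
    HasDerivAt (fun σ : ℝ => laxPhi γ ρR pR σ * (uR + laxPsi γ ρR pR σ))
      ((uR + cR) / cR ^ 2) pR := by
  have hγ0 : (0:ℝ) < γ := by linarith
  have hγ1 : (0:ℝ) < γ + 1 := by linarith
  have hcpos : 0 < cR := by
    rw [hcR]; exact Real.sqrt_pos.mpr (by positivity)
  have hc2 : cR ^ 2 = γ * pR / ρR := by
    rw [hcR]; exact Real.sq_sqrt (by positivity)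
  have hval : (uR + cR) / cR ^ 2 = (uR + Real.sqrt (γ * pR / ρR)) * ρR / (γ * pR) := by
    rw [← hcR, hc2]
    field_simp
  rw [hval]
  have h1 := laxBranch1_deriv γ ρR pR uR hγ hρ hp
  have h2 := laxBranch2_deriv γ ρR pR uR hγ hρ hp
  have hL : HasDerivWithinAt (fun σ : ℝ => laxPhi γ ρR pR σ * (uR + laxPsi γ ρR pR σ))
      ((uR + Real.sqrt (γ * pR / ρR)) * ρR / (γ * pR)) (Set.Iic pR) pR := by
    refine (h1.hasDerivWithinAt).congr ?_ ?_
    · intro σ hσ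
      have hσ' : σ ≤ pR := hσ
      simp only [laxPhi, laxPsi, laxBranch1, if_pos hσ']
    · simp only [laxPhi, laxPsi, laxBranch1, if_pos (le_refl pR)]
  have hR : HasDerivWithinAt (fun σ : ℝ => laxPhi γ ρR pR σ * (uR + laxPsi γ ρR pR σ))
      ((uR + Real.sqrt (γ * pR / ρR)) * ρR / (γ * pR)) (Set.Ici pR) pR := by
    have hbase : laxPhi γ ρR pR pR * (uR + laxPsi γ ρR pR pR) = laxBranch2 γ ρR pR uR pR := by
      have hm0 : 0 < (γ - 1) / (γ + 1) := div_pos (by linarith) hγ1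
      have hden : (γ - 1) / (γ + 1) * pR + pR ≠ 0 := (add_pos (mul_pos hm0 hp) hp).ne'
      simp only [laxPhi, laxPsi, laxBranch2, if_pos (le_refl pR), div_self hp.ne',
        Real.one_rpow, sub_self, zero_mul, mul_zero, add_zero, mul_one]
      rw [show pR + (γ - 1) / (γ + 1) * pR = (γ - 1) / (γ + 1) * pR + pR from by ring,
        mul_div_assoc, div_self hden, mul_one]
    refine (h2.hasDerivWithinAt).congr ?_ hbase
    intro σ hσ
    rcases eq_or_lt_of_le (Set.mem_Ici.mp hσ) with heq | hlt
    · rw [← heq]; exact hbase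
    · simp only [laxPhi, laxPsi, laxBranch2, if_neg (not_le.mpr hlt)]
  have := hL.union hR
  rw [Set.Iic_union_Ici] at this
  rwa [hasDerivWithinAt_univ] at this
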